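/- The power graph of an EPO-group G (a finite group all of whose nonidentity elements have prime order) is isomorphic to K₁ ∨ (⊕_{p ∈ π(G)} c_p · K_{p-1}), the join of a single vertex with the disjoint union, over primes p dividing |G|, of c_p copies of the complete graph K_{p-1}, where c_p is the number of cyclic subgroups of order p in G. -/

import Mathlib

open SimpleGraph

noncomputable def treeCount {V : Type*} (Γ : SimpleGraph V) : ℕ :=
  {H : Γ.Subgraph | H.IsSpanning ∧ H.coe.IsTree}.ncard

def powerGraph (G : Type*) [Group G] : SimpleGraph G where
  Adj x y := x ≠ y ∧ (x ∈ Subgroup.zpowers y ∨ y ∈ Subgroup.zpowers x)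
  symm := by constructor; rintro a b ⟨h, h'⟩; exact ⟨h.symm, h'.symm⟩
  loopless := by constructor; intro a h; exact h.1 rfl

def powerGraphOn (G : Type*) [Group G] (X : Set G) : SimpleGraph X where
  Adj x y := x ≠ y ∧ (Subgroup.zpowers (x : G) ≤ Subgroup.zpowers (y : G) ∨
      Subgroup.zpowers (y : G) ≤ Subgroup.zpowers (x : G))
  symm := by constructor; rintro a b ⟨h, h'⟩; exact ⟨h.symm, h'.symm⟩
  loopless := by constructor; intro a h; exact h.1 rfl

def joinGraph {α β : Type*} (G₁ : SimpleGraph α) (G₂ : SimpleGraph β) :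
    SimpleGraph (α ⊕ β) where
  Adj u v := match u, v with
    | .inl a, .inl b => G₁.Adj a b
    | .inr a, .inr b => G₂.Adj a b
    | _, _ => True
  symm := by constructor; rintro (a|a) (b|b) h <;> simp_all <;> exact h.symm
  loopless := by constructor; rintro (a|a) h <;> exact h.ne rfl

def disjUnionGraph {α β : Type*} (G₁ : SimpleGraph α) (G₂ : SimpleGraph β) :
    SimpleGraph (α ⊕ β) where
  Adj u v := match u, v with
    | .inl a, .inl b => G₁.Adj a b
    | .inr a, .inr b => G₂.Adj a b
    | _, _ => False
  symm := by constructor; rintro (a|a) (b|b) h <;> simp_all <;> exact h.symm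
  loopless := by constructor; rintro (a|a) h <;> exact h.ne rfl

def copiesK (c k : ℕ) : SimpleGraph (Fin c × Fin k) where
  Adj u v := u.1 = v.1 ∧ u ≠ v
  symm := by constructor; rintro a b ⟨h, h'⟩; exact ⟨h.symm, h'.symm⟩
  loopless := by constructor; intro a h; exact h.2 rfl

/-- The disjoint union, over the cyclic subgroups `C` of prime order of `G`, of
the cliques on the nonidentity elements of `C` (i.e. ⊕_{p ∈ π(G)} c_p·K_{p-1}). -/
def cliquesOfPrimeOrderSubgroups (G : Type*) [Group G] :
    SimpleGraph (Σ C : {C : Subgroup G // ∃ p : ℕ, p.Prime ∧ Nat.card C = p},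
      {x : G // x ∈ C.1.1 ∧ x ≠ 1}) where
  Adj u v := u.1 = v.1 ∧ u ≠ v
  symm := by constructor; rintro a b ⟨h, h'⟩; exact ⟨h.symm, h'.symm⟩
  loopless := by constructor; intro a h; exact h.2 rfl

section Aux

variable {G : Type*} [Group G] [Finite G]

lemma zpowers_eq_of_mem_primeOrder {C : Subgroup G} {p : ℕ} (hp : p.Prime)
    (hC : Nat.card C = p) {x : G} (hx : x ∈ C) (hx1 : x ≠ 1) :
    Subgroup.zpowers x = C := by
  have hle : Subgroup.zpowers x ≤ C := Subgroup.zpowers_le.2 hx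
  have hdvd : orderOf x ∣ p := hC ▸ C.orderOf_dvd_natCard hx
  have ho : orderOf x = p := by
    rcases (Nat.Prime.eq_one_or_self_of_dvd hp _ hdvd) with h | h
    · exact absurd (orderOf_eq_one_iff.1 h) hx1
    · exact h
  exact Subgroup.eq_of_le_of_card_ge hle (by rw [Nat.card_zpowers, ho, hC])

lemma epo_adj_iff (hEPO : ∀ g : G, g ≠ 1 → (orderOf g).Prime)
    {x y : G} (hx : x ≠ 1) (hy : y ≠ 1) :
    (x ∈ Subgroup.zpowers y ∨ y ∈ Subgroup.zpowers x) ↔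
      Subgroup.zpowers x = Subgroup.zpowers y := by
  constructor
  · rintro (h | h)
    · exact zpowers_eq_of_mem_primeOrder (hEPO y hy) (Nat.card_zpowers y) h hx
    · exact (zpowers_eq_of_mem_primeOrder (hEPO x hx) (Nat.card_zpowers x) h hy).symm
  · intro h
    exact Or.inl (h ▸ Subgroup.mem_zpowers x)

end Aux

/-- The power graph of an EPO-group is the join of a single vertex with a
disjoint union of cliques: K₁ ∨ (⊕_{p ∈ π(G)} c_p·K_{p-1}). -/
theorem powerGraph_EPO_iso (G : Type*) [Group G] [Finite G]
    (hEPO : ∀ g : G, g ≠ 1 → (orderOf g).Prime) :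
    Nonempty ((powerGraph G) ≃g
      joinGraph (completeGraph PUnit) (cliquesOfPrimeOrderSubgroups G)) := by
  classical
  set val : (Σ C : {C : Subgroup G // ∃ p : ℕ, p.Prime ∧ Nat.card C = p},
      {x : G // x ∈ C.1.1 ∧ x ≠ 1}) → G := fun u => u.2.1 with hval
  refine ⟨⟨⟨fun g => if h : g = 1 then Sum.inl PUnit.unit else
      Sum.inr ⟨⟨Subgroup.zpowers g, orderOf g, hEPO g h, Nat.card_zpowers g⟩,
        ⟨g, Subgroup.mem_zpowers g, h⟩⟩,
    fun u => match u with
      | Sum.inl _ => 1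
      | Sum.inr u => val u, ?_, ?_⟩, ?_⟩⟩
  · intro g
    by_cases h : g = 1 <;> simp [h, hval]
  · rintro (u | ⟨⟨C, p, hp, hC⟩, ⟨x, hx, hx1⟩⟩)
    · simp
    · simp only [hval, hx1, dif_neg, not_false_iff]
      have he := zpowers_eq_of_mem_primeOrder hp hC hx hx1
      subst he
      rfl
  · intro a b
    by_cases ha : a = 1 <;> by_cases hb : b = 1
    · subst ha hb; simp [powerGraph, joinGraph]
    · subst ha
      simp [powerGraph, joinGraph, hb, Ne.symm hb, Subgroup.one_mem]
    · subst hb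
      simp [powerGraph, joinGraph, ha, Subgroup.one_mem]
    · simp only [Equiv.coe_fn_mk, ha, hb, dif_neg, not_false_iff]
      show (cliquesOfPrimeOrderSubgroups G).Adj _ _ ↔ (powerGraph G).Adj a b
      constructor
      · rintro ⟨h1, h2⟩
        have hab : a ≠ b := fun h => h2 (by subst h; rfl)
        refine ⟨hab, ?_⟩
        rw [epo_adj_iff hEPO ha hb]
        exact congrArg Subtype.val h1
      · rintro ⟨hab, h⟩
        rw [epo_adj_iff hEPO ha hb] at h
        refine ⟨Subtype.ext h, fun hcon => hab (congrArg val hcon)⟩
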